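/- Let λ ∈ (0,1), a ∈ ℝ, σ > 0, Y₀ > 0, T > 0 and M > 0. Then there exists K > 0 such that for every k ≥ K the following holds: if B : [0,∞) → ℝ is continuous with B(0) = 0 and satisfies |B(t) − B(s)| ≤ M·(t − s)^λ for all 0 ≤ s ≤ t ≤ T, and Y is a stopped solution with parameter k driven by B starting from Y₀, then Y(t) > 0 for all t ∈ [0,T] (i.e. the zero-hitting time τ of Y satisfies τ > T). -/

import Mathlib

open scoped ENNReal

/-- The first zero-hitting time `τ = inf{t ≥ 0 : Y t = 0}` of a path `Y`, as an extended
nonnegative real (with `τ = ∞` if `Y` never vanishes on `[0,∞)`). -/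
noncomputable def zeroHitTime (Y : ℝ → ℝ) : ℝ≥0∞ :=
  ⨅ t ∈ {t : ℝ | 0 ≤ t ∧ Y t = 0}, ENNReal.ofReal t

/-- A stopped solution of `dY = (1/2)(k/Y − aY) dt + (σ/2) dB`, `Y 0 = Y₀`, driven by the
path `B`: a continuous function on `[0,∞)` satisfying the integral equation before its
first zero-hitting time `τ` and vanishing from `τ` onwards. -/
def IsStoppedSolution (B : ℝ → ℝ) (k a σ Y₀ : ℝ) (Y : ℝ → ℝ) : Prop :=
  ContinuousOn Y (Set.Ici 0) ∧ Y 0 = Y₀ ∧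
  (∀ t : ℝ, 0 ≤ t → ENNReal.ofReal t < zeroHitTime Y →
    Y t = Y₀ + (1 / 2) * (∫ s in (0:ℝ)..t, (k / Y s - a * Y s)) + (σ / 2) * B t) ∧
  (∀ t : ℝ, 0 ≤ t → zeroHitTime Y ≤ ENNReal.ofReal t → Y t = 0)

set_option maxHeartbeats 1000000 in
/-- deterministic core of Theorem 4.2: given `λ ∈ (0,1)`, `a ∈ ℝ`, `σ > 0`,
`Y₀ > 0`, `T > 0`, `M > 0`, there is `K > 0` such that for every `k ≥ K`, every driving
path `B` with `B 0 = 0` which is `λ`-Hölder on `[0,T]` with constant `M`, and every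
stopped solution `Y` with parameter `k` driven by `B`, the path `Y` stays strictly
positive on `[0,T]`. -/
theorem fCIR_positive_on_interval_for_large_k (l a σ Y₀ T M : ℝ)
    (hl0 : 0 < l) (hl1 : l < 1) (hσ : 0 < σ) (hY₀ : 0 < Y₀) (hT : 0 < T) (hM : 0 < M) :
    ∃ K : ℝ, 0 < K ∧ ∀ k : ℝ, K ≤ k → ∀ B Y : ℝ → ℝ, Continuous B → B 0 = 0 →
      (∀ s t : ℝ, 0 ≤ s → s ≤ t → t ≤ T → |B t - B s| ≤ M * (t - s) ^ l) →
      IsStoppedSolution B k a σ Y₀ Y →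
      ∀ t ∈ Set.Icc (0:ℝ) T, 0 < Y t := by
  set ε : ℝ := Y₀ / 2 with hεdef
  have hε : 0 < ε := by positivity
  set δ₀ : ℝ := (ε / (σ * M)) ^ (1 / l) with hδ₀def
  have hδ₀ : 0 < δ₀ := Real.rpow_pos_of_pos (by positivity) _
  set C : ℝ := σ * M * max T 1 with hCdef
  have hC : 0 < C := by
    have : (0:ℝ) < max T 1 := lt_max_of_lt_right one_pos
    positivity
  clear_value ε δ₀ C
  refine ⟨(|a| * ε + C / δ₀) * ε + 1, by positivity, ?_⟩
  intro k hk B Y hB hB0 hHol hY t ht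
  obtain ⟨hYc, hY0, hEq, hstop⟩ := hY
  by_contra hcon
  push_neg at hcon
  obtain ⟨ht0, htT⟩ := ht
  have hk0 : 0 < k := lt_of_lt_of_le (by positivity) hk
  -- continuity of Y on subintervals of [0, ∞)
  have hYc' : ∀ u v : ℝ, 0 ≤ u → ContinuousOn Y (Set.Icc u v) := fun u v hu =>
    hYc.mono (fun x hx => le_trans hu hx.1)
  -- a zero of Y in [0, t]
  obtain ⟨t₁, ht₁mem, ht₁⟩ : ∃ t₁ ∈ Set.Icc (0:ℝ) t, Y t₁ = 0 := by
    have := intermediate_value_Icc' ht0 (hYc' 0 t le_rfl)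
      (show (0:ℝ) ∈ Set.Icc (Y t) (Y 0) from ⟨hcon, by rw [hY0]; exact hY₀.le⟩)
    obtain ⟨t₁, h1, h2⟩ := this
    exact ⟨t₁, h1, h2⟩
  -- τ : first zero of Y
  set Z : Set ℝ := Set.Icc 0 t₁ ∩ Y ⁻¹' {0} with hZdef
  have hZclosed : IsClosed Z :=
    (hYc' 0 t₁ le_rfl).preimage_isClosed_of_isClosed isClosed_Icc isClosed_singleton
  have hZne : Z.Nonempty := ⟨t₁, ⟨ht₁mem.1, le_rfl⟩, ht₁⟩
  have hZbdd : BddBelow Z := ⟨0, fun x hx => hx.1.1⟩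
  set τ : ℝ := sInf Z with hτdef
  have hτmem : τ ∈ Z := hZclosed.csInf_mem hZne hZbdd
  clear_value τ
  have hτ0 : 0 ≤ τ := hτmem.1.1
  have hYτ : Y τ = 0 := hτmem.2
  have hτpos : 0 < τ := by
    rcases hτ0.lt_or_eq with h | h; · exact h
    exfalso; rw [← h, hY0] at hYτ; exact hY₀.ne' hYτ
  have hτT : τ ≤ T := le_trans hτmem.1.2 (le_trans ht₁mem.2 htT)
  -- Y is positive strictly before τ
  have hpos : ∀ r : ℝ, 0 ≤ r → r < τ → 0 < Y r := by
    intro r hr0 hrτ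
    by_contra hneg
    push_neg at hneg
    obtain ⟨r', hr'mem, hr'⟩ := intermediate_value_Icc' hr0 (hYc' 0 r le_rfl)
      (show (0:ℝ) ∈ Set.Icc (Y r) (Y 0) from ⟨hneg, by rw [hY0]; exact hY₀.le⟩)
    have hmem : r' ∈ Z := ⟨⟨hr'mem.1, le_trans hr'mem.2 (le_trans hrτ.le hτmem.1.2)⟩, hr'⟩
    have hle := csInf_le hZbdd hmem
    rw [← hτdef] at hle
    linarith [hr'mem.2]
  -- zeroHitTime Y is at least ofReal τ
  have hhit : ENNReal.ofReal τ ≤ zeroHitTime Y := by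
    refine le_iInf₂ fun z hz => ?_
    rcases lt_or_ge z τ with h | h
    · exact absurd hz.2 (hpos z hz.1 h).ne'
    · exact ENNReal.ofReal_le_ofReal h
  have hbefore : ∀ r : ℝ, 0 ≤ r → r < τ →
      Y r = Y₀ + (1 / 2) * (∫ s in (0:ℝ)..r, (k / Y s - a * Y s)) + (σ / 2) * B r := by
    intro r hr0 hrτ
    exact hEq r hr0 (lt_of_lt_of_le ((ENNReal.ofReal_lt_ofReal_iff hτpos).2 hrτ) hhit)
  -- s : last time Y equals ε before τ
  set S1 : Set ℝ := Set.Icc 0 τ ∩ Y ⁻¹' {ε} with hS1def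
  have hS1closed : IsClosed S1 :=
    (hYc' 0 τ le_rfl).preimage_isClosed_of_isClosed isClosed_Icc isClosed_singleton
  have hS1ne : S1.Nonempty := by
    obtain ⟨r, hrmem, hr⟩ := intermediate_value_Icc' hτ0 (hYc' 0 τ le_rfl)
      (show ε ∈ Set.Icc (Y τ) (Y 0) from ⟨by rw [hYτ]; exact hε.le,
        by rw [hY0, hεdef]; linarith⟩)
    exact ⟨r, hrmem, hr⟩
  have hS1bdd : BddAbove S1 := ⟨τ, fun x hx => hx.1.2⟩
  set s : ℝ := sSup S1 with hsdef
  have hsmem : s ∈ S1 := hS1closed.csSup_mem hS1ne hS1bdd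
  clear_value s
  have hs0 : 0 ≤ s := hsmem.1.1
  have hsτ' : s ≤ τ := hsmem.1.2
  have hYs : Y s = ε := hsmem.2
  have hsτ : s < τ := lt_of_le_of_ne hsτ' (fun h => by rw [h, hYτ] at hYs; linarith)
  -- Y < ε strictly after s up to τ
  have hUlt : ∀ r : ℝ, s < r → r ≤ τ → Y r < ε := by
    intro r hsr hrτ
    by_contra hge
    push_neg at hge
    obtain ⟨r', hr'mem, hr'⟩ := intermediate_value_Icc' hrτ (hYc' r τ (hs0.trans hsr.le))
      (show ε ∈ Set.Icc (Y τ) (Y r) from ⟨by rw [hYτ]; exact hε.le, hge⟩)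
    have hmem : r' ∈ S1 := ⟨⟨le_trans (hs0.trans hsr.le) hr'mem.1, hr'mem.2⟩, hr'⟩
    have hle := le_csSup hS1bdd hmem
    rw [← hsdef] at hle
    linarith [hr'mem.1]
  -- u : first time in [s, τ] that Y equals ε/2
  set S2 : Set ℝ := Set.Icc s τ ∩ Y ⁻¹' {ε / 2} with hS2def
  have hS2closed : IsClosed S2 :=
    ((hYc' 0 τ le_rfl).mono (Set.Icc_subset_Icc_left hs0)).preimage_isClosed_of_isClosed
      isClosed_Icc isClosed_singleton
  have hS2ne : S2.Nonempty := by
    obtain ⟨r, hrmem, hr⟩ := intermediate_value_Icc' hsτ' ((hYc' 0 τ le_rfl).mono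
      (Set.Icc_subset_Icc_left hs0))
      (show ε / 2 ∈ Set.Icc (Y τ) (Y s) from ⟨by rw [hYτ]; positivity, by rw [hYs]; linarith⟩)
    exact ⟨r, hrmem, hr⟩
  have hS2bdd : BddBelow S2 := ⟨s, fun x hx => hx.1.1⟩
  set u : ℝ := sInf S2 with hudef
  have humem : u ∈ S2 := hS2closed.csInf_mem hS2ne hS2bdd
  clear_value u
  have hsu' : s ≤ u := humem.1.1
  have huτ' : u ≤ τ := humem.1.2
  have hYu : Y u = ε / 2 := humem.2
  have hsu : s < u := lt_of_le_of_ne hsu' (fun h => by rw [← h, hYs] at hYu; linarith)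
  have huτ : u < τ := lt_of_le_of_ne huτ' (fun h => by rw [h, hYτ] at hYu; linarith)
  have hu0 : 0 ≤ u := hs0.trans hsu'
  -- bounds for Y on [s, u]
  have hlow : ∀ r ∈ Set.Icc s u, ε / 2 ≤ Y r := by
    intro r hr
    by_contra hlt
    push_neg at hlt
    obtain ⟨r', hr'mem, hr'⟩ := intermediate_value_Icc' hr.1 ((hYc' 0 u le_rfl).mono
      (Set.Icc_subset_Icc_left hs0 |>.trans (Set.Icc_subset_Icc_right hr.2)))
      (show ε / 2 ∈ Set.Icc (Y r) (Y s) from ⟨hlt.le, by rw [hYs]; linarith⟩)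
    have h2 : r' ∈ S2 := ⟨⟨hr'mem.1, le_trans (hr'mem.2.trans hr.2) huτ'⟩, hr'⟩
    have hle := csInf_le hS2bdd h2
    rw [← hudef] at hle
    have hru : r' = u := le_antisymm (hr'mem.2.trans hr.2) hle
    rw [hru] at hr'mem
    have : r = u := le_antisymm hr.2 hr'mem.2
    rw [this, hYu] at hlt; linarith
  have hhigh : ∀ r ∈ Set.Icc s u, Y r ≤ ε := by
    intro r hr
    rcases hr.1.lt_or_eq with h | h
    · exact (hUlt r h (hr.2.trans huτ')).le
    · rw [← h, hYs]
  -- integrability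
  set f : ℝ → ℝ := fun r => k / Y r - a * Y r with hfdef
  clear_value f
  have hfont : ContinuousOn f (Set.Icc 0 u) := by
    have hYne : ∀ r ∈ Set.Icc (0:ℝ) u, Y r ≠ 0 := fun r hr =>
      (hpos r hr.1 (lt_of_le_of_lt hr.2 huτ)).ne'
    rw [hfdef]
    exact ((continuousOn_const.div (hYc' 0 u le_rfl) hYne).sub
      (continuousOn_const.mul (hYc' 0 u le_rfl)))
  have hint0s : IntervalIntegrable f MeasureTheory.volume 0 s :=
    (hfont.mono (by rw [Set.uIcc_of_le hs0]; exact Set.Icc_subset_Icc_right hsu')).intervalIntegrable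
  have hintsu : IntervalIntegrable f MeasureTheory.volume s u := by
    refine (hfont.mono ?_).intervalIntegrable
    rw [Set.uIcc_of_le hsu']
    exact Set.Icc_subset_Icc_left hs0
  have hint0u : IntervalIntegrable f MeasureTheory.volume 0 u :=
    (hfont.mono (by rw [Set.uIcc_of_le hu0])).intervalIntegrable
  -- the key identity on [s, u]
  have hYsEq := hbefore s hs0 hsτ
  have hYuEq := hbefore u hu0 huτ
  have hadd := intervalIntegral.integral_add_adjacent_intervals hint0s hintsu
  have hidentity : Y u - Y s =
      (1 / 2) * (∫ r in s..u, f r) + (σ / 2) * (B u - B s) := by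
    rw [hYuEq, hYsEq]
    have : (∫ r in (0:ℝ)..u, f r) = (∫ r in (0:ℝ)..s, f r) + ∫ r in s..u, f r := hadd.symm
    rw [this]; ring
  -- lower bound for the integral
  set c : ℝ := k / ε - |a| * ε with hcdef
  clear_value c
  have hptwise : ∀ r ∈ Set.Icc s u, c ≤ f r := by
    intro r hr
    have hYr2 : ε / 2 ≤ Y r := hlow r hr
    have hYrε : Y r ≤ ε := hhigh r hr
    have hYrpos : 0 < Y r := by linarith
    have h1 : k / ε ≤ k / Y r := div_le_div_of_nonneg_left hk0.le hYrpos hYrε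
    have h2 : a * Y r ≤ |a| * ε := by
      calc a * Y r ≤ |a * Y r| := le_abs_self _
        _ = |a| * Y r := by rw [abs_mul, abs_of_pos hYrpos]
        _ ≤ |a| * ε := mul_le_mul_of_nonneg_left hYrε (abs_nonneg a)
    rw [hfdef]
    simp only [hcdef]
    linarith
  have hintlb : c * (u - s) ≤ ∫ r in s..u, f r := by
    have := intervalIntegral.integral_mono_on hsu'
      (intervalIntegrable_const (c := c)) hintsu hptwise
    rwa [intervalIntegral.integral_const, smul_eq_mul, mul_comm] at this
  -- Hölder bound
  set δ : ℝ := u - s with hδdef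
  clear_value δ
  have hδpos : 0 < δ := by simp only [hδdef]; linarith
  have hHolsu : |B u - B s| ≤ M * δ ^ l := by
    rw [hδdef]; exact hHol s u hs0 hsu' (huτ'.trans hτT)
  -- combine: σ * M * δ ^ l ≥ ε + c * δ
  have hcombine : ε + c * δ ≤ σ * M * δ ^ l := by
    have hid := hidentity
    rw [hYu, hYs] at hid
    have hnb : -(M * δ ^ l) ≤ B u - B s := by
      have := neg_abs_le (B u - B s)
      linarith [hHolsu]
    have hP := mul_le_mul_of_nonneg_left hnb (by positivity : (0:ℝ) ≤ σ / 2)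
    linarith [hintlb, hid, hP]
  -- c is positive and large
  have hcgt : C / δ₀ < c := by
    have hkε : (|a| * ε + C / δ₀) * ε + 1 ≤ k := hk
    have h2 : |a| * ε + C / δ₀ + 1 / ε ≤ k / ε := by
      rw [le_div_iff₀ hε]
      have hεne : ε ≠ 0 := hε.ne'
      have hexp : (|a| * ε + C / δ₀ + 1 / ε) * ε = (|a| * ε + C / δ₀) * ε + 1 := by
        field_simp
      linarith
    have h1ε : 0 < 1 / ε := by positivity
    simp only [hcdef]; linarith
  have hcpos : 0 < c := lt_of_le_of_lt (by positivity) hcgt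
  -- δ ≥ δ₀
  have hδl : ε / (σ * M) ≤ δ ^ l := by
    rw [div_le_iff₀ (by positivity)]
    linarith [hcombine, mul_pos hcpos hδpos]
  have hδδ₀ : δ₀ ≤ δ := by
    calc δ₀ = (ε / (σ * M)) ^ (1 / l) := hδ₀def
      _ ≤ (δ ^ l) ^ (1 / l) := Real.rpow_le_rpow (by positivity) hδl (by positivity)
      _ = δ ^ (l * (1 / l)) := (Real.rpow_mul hδpos.le l (1 / l)).symm
      _ = δ := by rw [mul_one_div, div_self hl0.ne', Real.rpow_one]
  -- δ ^ l ≤ max T 1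
  have hδT : δ ≤ T := by
    have : u ≤ T := huτ'.trans hτT
    simp only [hδdef]; linarith
  have hδlub : δ ^ l ≤ max T 1 := by
    calc δ ^ l ≤ (max T 1) ^ l :=
          Real.rpow_le_rpow hδpos.le (hδT.trans (le_max_left T 1)) hl0.le
      _ ≤ (max T 1) ^ (1:ℝ) := Real.rpow_le_rpow_of_exponent_le (le_max_right T 1) hl1.le
      _ = max T 1 := Real.rpow_one _
  -- contradiction
  have hfinal : c * δ ≤ C := by
    rw [hCdef]
    have : c * δ ≤ σ * M * δ ^ l := by linarith [hcombine, hε]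
    calc c * δ ≤ σ * M * δ ^ l := this
      _ ≤ σ * M * max T 1 := by
          have := mul_le_mul_of_nonneg_left hδlub (by positivity : (0:ℝ) ≤ σ * M)
          linarith
  have : c ≤ C / δ₀ := by
    rw [le_div_iff₀ hδ₀]
    linarith [hfinal, mul_nonneg hcpos.le (sub_nonneg.2 hδδ₀)]
  linarith
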